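/- Let Θ1 = J1 + B1 and Θ2 = J2 + B2, with J = (J1, J2) of rank r0, rank(Bk) = rk for k = 1,2, rank((B1, B2)) = r1 + r2, and rank(Θk) = r0 + rk for k = 1,2. Then there exists at most one decomposition {J1, J2, B1, B2} satisfying the orthogonality condition JᵀB = 0 (where B = (B1, B2)). -/

import Mathlib

open Matrix BigOperators

/-- Frobenius norm of a real matrix. -/
noncomputable def frobNorm {m n : Type*} [Fintype m] [Fintype n]
    (X : Matrix m n ℝ) : ℝ :=
  Real.sqrt (∑ i, ∑ j, (X i j) ^ 2)

/-- Nuclear norm: sum of singular values, i.e. the sum of the square roots of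
the eigenvalues of `Xᴴ * X`. -/
noncomputable def nuclearNorm {m n : Type*} [Fintype m] [Fintype n] [DecidableEq n]
    (X : Matrix m n ℝ) : ℝ :=
  ∑ i, Real.sqrt ((show (Xᵀ * X).IsHermitian by
    simp [Matrix.IsHermitian, Matrix.transpose_mul]).eigenvalues i)

namespace DecompAux

open Submodule FiniteDimensional

/-- Column space of a matrix. -/
noncomputable abbrev colSpace {N : ℕ} {m : Type*} [Fintype m]
    (A : Matrix (Fin N) m ℝ) : Submodule ℝ (Fin N → ℝ) :=
  LinearMap.range A.mulVecLin

variable {N : ℕ} {m m' : Type*} [Fintype m] [Fintype m']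

lemma rank_eq_finrank (A : Matrix (Fin N) m ℝ) :
    A.rank = Module.finrank ℝ (colSpace A) := rfl

lemma colSpace_fromColumns (A : Matrix (Fin N) m ℝ) (B : Matrix (Fin N) m' ℝ) :
    colSpace (fromCols A B) = colSpace A ⊔ colSpace B := by
  apply le_antisymm
  · rintro v ⟨x, rfl⟩
    have : (fromCols A B).mulVecLin x
        = A *ᵥ (x ∘ Sum.inl) + B *ᵥ (x ∘ Sum.inr) := by
      rw [Matrix.mulVecLin_apply, ← Sum.elim_comp_inl_inr x,
        Matrix.fromCols_mulVec_sumElim]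
      simp
    rw [this]
    exact Submodule.add_mem _ (Submodule.mem_sup_left ⟨_, rfl⟩)
      (Submodule.mem_sup_right ⟨_, rfl⟩)
  · apply sup_le
    · rintro v ⟨x, rfl⟩
      refine ⟨Sum.elim x 0, ?_⟩
      simp [Matrix.mulVecLin_apply]
    · rintro v ⟨x, rfl⟩
      refine ⟨Sum.elim 0 x, ?_⟩
      simp [Matrix.mulVecLin_apply]

lemma colSpace_add_le (A B : Matrix (Fin N) m ℝ) :
    colSpace (A + B) ≤ colSpace A ⊔ colSpace B := by
  rintro v ⟨x, rfl⟩
  rw [Matrix.mulVecLin_apply, Matrix.add_mulVec]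
  exact Submodule.add_mem _ (Submodule.mem_sup_left ⟨x, rfl⟩)
    (Submodule.mem_sup_right ⟨x, rfl⟩)

/-- Orthogonality of column spaces from `Aᵀ * B = 0`. -/
lemma orth_of_mul_eq_zero {A : Matrix (Fin N) m ℝ} {B : Matrix (Fin N) m' ℝ}
    (h : Aᵀ * B = 0) :
    ∀ u ∈ colSpace A, ∀ v ∈ colSpace B, u ⬝ᵥ v = 0 := by
  rintro _ ⟨x, rfl⟩ _ ⟨y, rfl⟩
  simp only [Matrix.mulVecLin_apply]
  calc (A *ᵥ x) ⬝ᵥ (B *ᵥ y) = ((A *ᵥ x) ᵥ* B) ⬝ᵥ y := by rw [Matrix.dotProduct_mulVec]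
    _ = (x ᵥ* (Aᵀ * B)) ⬝ᵥ y := by rw [Matrix.vecMul_mulVec]
    _ = 0 := by rw [h, Matrix.vecMul_zero, zero_dotProduct]

lemma disjoint_of_orth {U V : Submodule ℝ (Fin N → ℝ)}
    (h : ∀ u ∈ U, ∀ v ∈ V, u ⬝ᵥ v = 0) : U ⊓ V = ⊥ := by
  rw [eq_bot_iff]
  rintro v ⟨hvU, hvV⟩
  have := h v hvU v hvV
  simpa [dotProduct_self_eq_zero] using this

lemma finrank_sup_of_orth {U V : Submodule ℝ (Fin N → ℝ)}
    (h : ∀ u ∈ U, ∀ v ∈ V, u ⬝ᵥ v = 0) :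
    Module.finrank ℝ ↥(U ⊔ V) = Module.finrank ℝ U + Module.finrank ℝ V := by
  have := Submodule.finrank_sup_add_finrank_inf_eq U V
  rw [disjoint_of_orth h] at this
  simpa using this

/-- The joint column space is determined by `Θ1` and `Θ2`. -/
lemma colSpace_J_eq {N p1 p2 r0 r1 r2 : ℕ}
    (Θ1 J1 B1 : Matrix (Fin N) (Fin p1) ℝ) (Θ2 J2 B2 : Matrix (Fin N) (Fin p2) ℝ)
    (hΘ1 : Θ1 = J1 + B1) (hΘ2 : Θ2 = J2 + B2)
    (hJ : (Matrix.fromCols J1 J2).rank = r0)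
    (hB1 : B1.rank = r1) (hB2 : B2.rank = r2)
    (hB : (Matrix.fromCols B1 B2).rank = r1 + r2)
    (hr1 : Θ1.rank = r0 + r1) (hr2 : Θ2.rank = r0 + r2)
    (horth : (Matrix.fromCols J1 J2)ᵀ * Matrix.fromCols B1 B2 = 0) :
    colSpace (Matrix.fromCols J1 J2) = colSpace Θ1 ⊓ colSpace Θ2 := by
  set VJ := colSpace (Matrix.fromCols J1 J2) with hVJ
  set VB := colSpace (Matrix.fromCols B1 B2) with hVB
  have horthJB : ∀ u ∈ VJ, ∀ v ∈ VB, u ⬝ᵥ v = 0 := orth_of_mul_eq_zero horth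
  have hJsup : VJ = colSpace J1 ⊔ colSpace J2 := colSpace_fromColumns _ _
  have hBsup : VB = colSpace B1 ⊔ colSpace B2 := colSpace_fromColumns _ _
  have hJ1le : colSpace J1 ≤ VJ := hJsup ▸ le_sup_left
  have hJ2le : colSpace J2 ≤ VJ := hJsup ▸ le_sup_right
  have hB1le : colSpace B1 ≤ VB := hBsup ▸ le_sup_left
  have hB2le : colSpace B2 ≤ VB := hBsup ▸ le_sup_right
  rw [rank_eq_finrank] at hJ hB1 hB2 hB hr1 hr2
  -- analyze Θ1
  have key : ∀ (p : ℕ) (Θ Jm Bm : Matrix (Fin N) (Fin p) ℝ) (rk : ℕ),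
      Θ = Jm + Bm → colSpace Jm ≤ VJ → colSpace Bm ≤ VB →
      Module.finrank ℝ (colSpace Bm) = rk →
      Module.finrank ℝ (colSpace Θ) = r0 + rk →
      colSpace Θ = VJ ⊔ colSpace Bm := by
    intro p Θ Jm Bm rk hΘ hJle hBle hBrk hΘrk
    have horth1 : ∀ u ∈ colSpace Jm, ∀ v ∈ colSpace Bm, u ⬝ᵥ v = 0 :=
      fun u hu v hv => horthJB u (hJle hu) v (hBle hv)
    have hsup1 : Module.finrank ℝ ↥(colSpace Jm ⊔ colSpace Bm)
        = Module.finrank ℝ (colSpace Jm) + rk := by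
      rw [finrank_sup_of_orth horth1, hBrk]
    have hΘle : colSpace Θ ≤ colSpace Jm ⊔ colSpace Bm := hΘ ▸ colSpace_add_le _ _
    have hJmle : Module.finrank ℝ (colSpace Jm) ≤ r0 := hJ ▸ Submodule.finrank_mono hJle
    have hΘle' : r0 + rk ≤ Module.finrank ℝ (colSpace Jm) + rk := by
      rw [← hΘrk, ← hsup1]
      exact Submodule.finrank_mono hΘle
    have hJm_eq : Module.finrank ℝ (colSpace Jm) = r0 := by omega
    have hJmVJ : colSpace Jm = VJ :=
      Submodule.eq_of_le_of_finrank_eq hJle (by rw [hJm_eq, hJ])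
    have : colSpace Θ = colSpace Jm ⊔ colSpace Bm :=
      Submodule.eq_of_le_of_finrank_eq hΘle (by rw [hΘrk, hsup1, hJm_eq])
    rw [this, hJmVJ]
  have hΘ1eq : colSpace Θ1 = VJ ⊔ colSpace B1 := key _ Θ1 J1 B1 r1 hΘ1 hJ1le hB1le hB1 hr1
  have hΘ2eq : colSpace Θ2 = VJ ⊔ colSpace B2 := key _ Θ2 J2 B2 r2 hΘ2 hJ2le hB2le hB2 hr2
  -- finrank of the sup of the Θ spaces
  have hsupΘ : colSpace Θ1 ⊔ colSpace Θ2 = VJ ⊔ VB := by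
    rw [hΘ1eq, hΘ2eq, hBsup]
    rw [sup_assoc, ← sup_assoc (colSpace B1), sup_comm (colSpace B1) VJ,
      sup_assoc, ← sup_assoc, sup_idem]
  have hfr_sup : Module.finrank ℝ ↥(colSpace Θ1 ⊔ colSpace Θ2) = r0 + (r1 + r2) := by
    rw [hsupΘ, finrank_sup_of_orth horthJB, hJ, hB]
  have hfr_inf : Module.finrank ℝ ↥(colSpace Θ1 ⊓ colSpace Θ2) = r0 := by
    have := Submodule.finrank_sup_add_finrank_inf_eq (colSpace Θ1) (colSpace Θ2)
    rw [hfr_sup, hr1, hr2] at this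
    omega
  have hle : VJ ≤ colSpace Θ1 ⊓ colSpace Θ2 :=
    le_inf (hΘ1eq ▸ le_sup_left) (hΘ2eq ▸ le_sup_left)
  exact Submodule.eq_of_le_of_finrank_eq hle (by rw [hJ, hfr_inf])

lemma fromColumns_add (A C : Matrix (Fin N) m ℝ) (B D : Matrix (Fin N) m' ℝ) :
    Matrix.fromCols (A + C) (B + D)
      = Matrix.fromCols A B + Matrix.fromCols C D := by
  ext i (j | j) <;> simp [Matrix.fromCols]

end DecompAux

/-- uniqueness of the joint/individual decomposition under the
rank conditions and the orthogonality condition `Jᵀ B = 0`. -/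
theorem decomposition_unique (n p1 p2 r0 r1 r2 : ℕ)
    (Θ1 : Matrix (Fin n) (Fin p1) ℝ) (Θ2 : Matrix (Fin n) (Fin p2) ℝ)
    (J1 J1' : Matrix (Fin n) (Fin p1) ℝ) (J2 J2' : Matrix (Fin n) (Fin p2) ℝ)
    (B1 B1' : Matrix (Fin n) (Fin p1) ℝ) (B2 B2' : Matrix (Fin n) (Fin p2) ℝ)
    (hΘ1 : Θ1 = J1 + B1) (hΘ2 : Θ2 = J2 + B2)
    (hΘ1' : Θ1 = J1' + B1') (hΘ2' : Θ2 = J2' + B2')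
    (hJ : (Matrix.fromCols J1 J2).rank = r0)
    (hJ' : (Matrix.fromCols J1' J2').rank = r0)
    (hB1 : B1.rank = r1) (hB2 : B2.rank = r2)
    (hB1' : B1'.rank = r1) (hB2' : B2'.rank = r2)
    (hB : (Matrix.fromCols B1 B2).rank = r1 + r2)
    (hB' : (Matrix.fromCols B1' B2').rank = r1 + r2)
    (hr1 : Θ1.rank = r0 + r1) (hr2 : Θ2.rank = r0 + r2)
    (horth : (Matrix.fromCols J1 J2)ᵀ * Matrix.fromCols B1 B2 = 0)
    (horth' : (Matrix.fromCols J1' J2')ᵀ * Matrix.fromCols B1' B2' = 0) :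
    J1 = J1' ∧ J2 = J2' ∧ B1 = B1' ∧ B2 = B2' := by
  open DecompAux in
  have hV : colSpace (Matrix.fromCols J1 J2) = colSpace (Matrix.fromCols J1' J2') := by
    rw [colSpace_J_eq Θ1 J1 B1 Θ2 J2 B2 hΘ1 hΘ2 hJ hB1 hB2 hB hr1 hr2 horth,
      colSpace_J_eq Θ1 J1' B1' Θ2 J2' B2' hΘ1' hΘ2' hJ' hB1' hB2' hB' hr1 hr2 horth']
  have hsum : Matrix.fromCols J1 J2 + Matrix.fromCols B1 B2
      = Matrix.fromCols J1' J2' + Matrix.fromCols B1' B2' := by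
    rw [← DecompAux.fromColumns_add, ← DecompAux.fromColumns_add, ← hΘ1, ← hΘ2, ← hΘ1', ← hΘ2']
  have horthJB := DecompAux.orth_of_mul_eq_zero horth
  have horthJB' := DecompAux.orth_of_mul_eq_zero horth'
  have hJeq : Matrix.fromCols J1 J2 = Matrix.fromCols J1' J2' := by
    have hzero : ∀ x, (Matrix.fromCols J1 J2 - Matrix.fromCols J1' J2') *ᵥ x = 0 := by
      intro x
      set u := (Matrix.fromCols J1 J2 - Matrix.fromCols J1' J2') *ᵥ x with hu
      have huJ : u ∈ colSpace (Matrix.fromCols J1 J2) := by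
        rw [hu, Matrix.sub_mulVec]
        refine Submodule.sub_mem _ ⟨x, rfl⟩ ?_
        rw [hV]; exact ⟨x, rfl⟩
      have huB : u = (Matrix.fromCols B1' B2') *ᵥ x - (Matrix.fromCols B1 B2) *ᵥ x := by
        rw [hu, Matrix.sub_mulVec]
        have := congrFun (congrFun (congrArg Matrix.mulVec hsum) x) -- not quite
        have h2 : (Matrix.fromCols J1 J2) *ᵥ x + (Matrix.fromCols B1 B2) *ᵥ x
            = (Matrix.fromCols J1' J2') *ᵥ x + (Matrix.fromCols B1' B2') *ᵥ x := by
          rw [← Matrix.add_mulVec, ← Matrix.add_mulVec, hsum]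
        funext i
        have := congrFun h2 i
        simp only [Pi.add_apply, Pi.sub_apply] at this ⊢
        linarith
      have hdot : u ⬝ᵥ u = 0 := by
        have h1 : u ⬝ᵥ ((Matrix.fromCols B1' B2') *ᵥ x) = 0 := by
          refine horthJB' u ?_ _ ⟨x, rfl⟩
          rw [← hV]; exact huJ
        have h2 : u ⬝ᵥ ((Matrix.fromCols B1 B2) *ᵥ x) = 0 :=
          horthJB u huJ _ ⟨x, rfl⟩
        rw [huB, dotProduct_sub, ← huB, h1, h2, sub_zero]
      exact dotProduct_self_eq_zero.mp hdot
    have : Matrix.fromCols J1 J2 - Matrix.fromCols J1' J2' = 0 := by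
      ext i j
      simpa [Matrix.mulVec_single] using congrFun (hzero (Pi.single j 1)) i
    ext i j
    have := congrFun (congrFun this i) j
    simp only [Matrix.sub_apply, Matrix.zero_apply, sub_eq_zero] at this
    exact this
  obtain ⟨e1, e2⟩ := Matrix.fromCols_inj.eq_iff.mp hJeq |>.imp id id
  refine ⟨e1, e2, ?_, ?_⟩
  · have := hΘ1.symm.trans hΘ1'
    rw [e1] at this
    exact add_left_cancel this
  · have := hΘ2.symm.trans hΘ2'
    rw [e2] at this
    exact add_left_cancel this
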